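/- Let D be the derivation on ℤ[a,x,y,z] with D(a)=az, D(x)=D(y)=D(z)=xy. Then for every n ≥ 0, Dⁿ(a) = a·L_n(x,y,z), where L_n(x,y,z) = Σ_{σ ∈ S_n} x^{jump(σ)} y^{des(σ)} z^{lsuc(σ)} (with σ(0)=0, jump counting i with σ(i) ≥ σ(i-1)+2, des counting 1 ≤ i ≤ n-1 with σ(i) > σ(i+1), lsuc counting i with σ(i-1)+1 = σ(i)), and L_0 = 1. -/

import Mathlib

open Finset

/-- The value `σ(i)` of a permutation of `{1,…,n}` at a one-based position `i`,
with the convention `σ(0) = 0` (and value `0` outside `[1,n]`). -/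
def pv {n : ℕ} (σ : Equiv.Perm (Fin n)) (i : ℕ) : ℕ :=
  if h : 1 ≤ i ∧ i ≤ n then ((σ ⟨i - 1, by omega⟩ : Fin n) : ℕ) + 1 else 0

/-- Number of excedances: indices `i` with `σ(i) > i`. -/
def exc {n : ℕ} (σ : Equiv.Perm (Fin n)) : ℕ :=
  ((Finset.Icc 1 n).filter (fun i => i < pv σ i)).card

/-- Number of fixed points: indices `i` with `σ(i) = i`. -/
def fixpt {n : ℕ} (σ : Equiv.Perm (Fin n)) : ℕ :=
  ((Finset.Icc 1 n).filter (fun i => pv σ i = i)).card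

/-- Number of left successions: indices `1 ≤ i ≤ n` with `σ(i-1) + 1 = σ(i)`. -/
def lsuc {n : ℕ} (σ : Equiv.Perm (Fin n)) : ℕ :=
  ((Finset.Icc 1 n).filter (fun i => pv σ (i - 1) + 1 = pv σ i)).card

/-- Number of jumps: indices `1 ≤ i ≤ n` with `σ(i) ≥ σ(i-1) + 2`. -/
def jump {n : ℕ} (σ : Equiv.Perm (Fin n)) : ℕ :=
  ((Finset.Icc 1 n).filter (fun i => pv σ (i - 1) + 2 ≤ pv σ i)).card

/-- Number of descents: indices `1 ≤ i ≤ n-1` with `σ(i) > σ(i+1)`. -/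
def des {n : ℕ} (σ : Equiv.Perm (Fin n)) : ℕ :=
  ((Finset.Icc 1 (n - 1)).filter (fun i => pv σ (i + 1) < pv σ i)).card

open MvPolynomial

/-- `L_n(x,y,z) = Σ_{σ ∈ S_n} x^{jump σ} y^{des σ} z^{lsuc σ}` with `x = X 1`, `y = X 2`,
`z = X 3` in `ℤ[a,x,y,z]` (`a = X 0`). -/
noncomputable def Lpoly (n : ℕ) : MvPolynomial (Fin 4) ℤ :=
  ∑ σ : Equiv.Perm (Fin n), X 1 ^ jump σ * X 2 ^ des σ * X 3 ^ lsuc σ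

variable {n : ℕ}

lemma pv_zero (σ : Equiv.Perm (Fin n)) : pv σ 0 = 0 := by simp [pv]

lemma pv_le (σ : Equiv.Perm (Fin n)) (i : ℕ) : pv σ i ≤ n := by
  unfold pv; split
  · have := (σ ⟨i - 1, by omega⟩).isLt; omega
  · omega

lemma pv_pos (σ : Equiv.Perm (Fin n)) {i : ℕ} (h1 : 1 ≤ i) (h2 : i ≤ n) : 1 ≤ pv σ i := by
  unfold pv; rw [dif_pos ⟨h1, h2⟩]; omega

lemma pv_eq_zero (σ : Equiv.Perm (Fin n)) {i : ℕ} (h : ¬ (1 ≤ i ∧ i ≤ n)) : pv σ i = 0 := by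
  unfold pv; rw [dif_neg h]

lemma pv_ne (σ : Equiv.Perm (Fin n)) {i : ℕ} (h1 : 1 ≤ i) (h2 : i ≤ n) :
    pv σ (i - 1) ≠ pv σ i := by
  rcases Nat.eq_or_lt_of_le h1 with h | h
  · subst h; simp only [Nat.sub_self, pv_zero]
    have := pv_pos σ (le_refl 1) h2; omega
  · have h1' : 1 ≤ i - 1 := by omega
    have h2' : i - 1 ≤ n := by omega
    unfold pv
    rw [dif_pos ⟨h1', h2'⟩, dif_pos ⟨h1, h2⟩]
    intro hc
    have : (σ ⟨i - 1 - 1, by omega⟩ : Fin n) = σ ⟨i - 1, by omega⟩ := Fin.ext (by omega)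
    have := σ.injective this
    simp only [Fin.mk.injEq] at this
    omega

/-- Insert the value `n+1` (0-based: `n`) after position `s` (i.e. at one-based position `s+1`). -/
def ins (τ : Equiv.Perm (Fin n)) (s : Fin (n + 1)) : Equiv.Perm (Fin (n + 1)) :=
  (finSuccEquiv' s).trans ((τ.optionCongr).trans (finSuccEquiv' (Fin.last n)).symm)

lemma ins_apply_self (τ : Equiv.Perm (Fin n)) (s : Fin (n + 1)) :
    ins τ s s = Fin.last n := by
  simp [ins, finSuccEquiv'_at, finSuccEquiv'_symm_none]

lemma ins_apply_succAbove (τ : Equiv.Perm (Fin n)) (s : Fin (n + 1)) (j : Fin n) :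
    ins τ s (s.succAbove j) = (τ j).castSucc := by
  simp [ins, finSuccEquiv'_succAbove]

lemma pv_ins (τ : Equiv.Perm (Fin n)) (s : Fin (n + 1)) (i : ℕ) :
    pv (ins τ s) i =
      if i = (s : ℕ) + 1 then n + 1 else if i ≤ (s : ℕ) then pv τ i else pv τ (i - 1) := by
  have hs := s.isLt
  by_cases hi : 1 ≤ i ∧ i ≤ n + 1
  · obtain ⟨hi1, hi2⟩ := hi
    have : pv (ins τ s) i = ((ins τ s ⟨i - 1, by omega⟩ : Fin (n+1)) : ℕ) + 1 := by
      unfold pv; rw [dif_pos ⟨hi1, hi2⟩]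
    rw [this]
    rcases Nat.lt_trichotomy i ((s : ℕ) + 1) with h | h | h
    · -- i ≤ s
      have hjlt : i - 1 < n := by omega
      have hp : (⟨i - 1, by omega⟩ : Fin (n+1)) = s.succAbove ⟨i - 1, hjlt⟩ := by
        rw [Fin.succAbove_of_castSucc_lt]
        · rfl
        · simp only [Fin.lt_def, Fin.coe_castSucc]; omega
      rw [hp, ins_apply_succAbove]
      rw [if_neg (by omega), if_pos (by omega)]
      unfold pv
      rw [dif_pos ⟨hi1, by omega⟩]
      simp
    · -- i = s + 1
      have hp : (⟨i - 1, by omega⟩ : Fin (n+1)) = s := Fin.ext (by simp; omega)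
      rw [hp, ins_apply_self, if_pos h]
      simp [Fin.last]
    · -- i ≥ s + 2
      have hjlt : i - 2 < n := by omega
      have hp : (⟨i - 1, by omega⟩ : Fin (n+1)) = s.succAbove ⟨i - 2, hjlt⟩ := by
        rw [Fin.succAbove_of_le_castSucc]
        · exact Fin.ext (by simp [Fin.succ]; omega)
        · simp only [Fin.le_def, Fin.coe_castSucc]; omega
      rw [hp, ins_apply_succAbove]
      rw [if_neg (by omega), if_neg (by omega)]
      unfold pv
      rw [dif_pos ⟨by omega, by omega⟩]
      simp only [Fin.coe_castSucc]
      congr 3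
  · rw [pv_eq_zero _ hi]
    have hi0 : i = 0 ∨ i > n + 1 := by omega
    rcases hi0 with h | h
    · subst h
      rw [if_neg (by omega), if_pos (by omega), pv_zero]
    · rw [if_neg (by omega), if_neg (by omega), pv_eq_zero _ (by omega)]

lemma card_erase_ite (X : Finset ℕ) (x : ℕ) :
    X.card = (X.erase x).card + (if x ∈ X then 1 else 0) := by
  by_cases h : x ∈ X
  · rw [if_pos h, Finset.card_erase_of_mem h]
    have := Finset.card_pos.mpr ⟨x, h⟩
    omega
  · rw [if_neg h, Finset.erase_eq_of_notMem h]; omega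

lemma card_pairs_ins (p : ℕ → ℕ → Prop) [DecidableRel p] (τ : Equiv.Perm (Fin n))
    (s : Fin (n + 1)) :
    ((Icc 1 (n+1)).filter (fun i => p (pv (ins τ s) (i-1)) (pv (ins τ s) i))).card
    = (((Icc 1 n).filter (fun i => p (pv τ (i-1)) (pv τ i))).erase ((s:ℕ)+1)).card
      + (if p (pv τ (s:ℕ)) (n+1) then 1 else 0)
      + (if (s:ℕ)+1 ≤ n ∧ p (n+1) (pv τ ((s:ℕ)+1)) then 1 else 0) := by
  have hs := s.isLt
  set A := (Icc 1 (n+1)).filter (fun i => p (pv (ins τ s) (i-1)) (pv (ins τ s) i)) with hAdef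
  set B := (Icc 1 n).filter (fun i => p (pv τ (i-1)) (pv τ i)) with hBdef
  have e1 : A.card = (A.erase ((s:ℕ)+1)).card + (if (s:ℕ)+1 ∈ A then 1 else 0) :=
    card_erase_ite _ _
  have e2 : (A.erase ((s:ℕ)+1)).card
      = ((A.erase ((s:ℕ)+1)).erase ((s:ℕ)+2)).card
        + (if (s:ℕ)+2 ∈ A.erase ((s:ℕ)+1) then 1 else 0) := card_erase_ite _ _
  have mem1 : ((s:ℕ)+1 ∈ A) ↔ p (pv τ (s:ℕ)) (n+1) := by
    rw [hAdef, Finset.mem_filter, Finset.mem_Icc]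
    rw [pv_ins, pv_ins]
    rw [if_neg (by omega), if_pos (by omega), if_pos rfl]
    simp only [Nat.add_sub_cancel]
    constructor
    · tauto
    · intro h; exact ⟨⟨by omega, by omega⟩, h⟩
  have mem2 : ((s:ℕ)+2 ∈ A.erase ((s:ℕ)+1)) ↔ ((s:ℕ)+1 ≤ n ∧ p (n+1) (pv τ ((s:ℕ)+1))) := by
    rw [Finset.mem_erase, hAdef, Finset.mem_filter, Finset.mem_Icc]
    rw [pv_ins, pv_ins]
    have h21 : (s:ℕ)+2-1 = (s:ℕ)+1 := by omega
    rw [h21, if_pos rfl, if_neg (by omega), if_neg (by omega)]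
    constructor
    · rintro ⟨-, ⟨h1, h2⟩, h3⟩
      exact ⟨by omega, by simpa using h3⟩
    · rintro ⟨h1, h2⟩
      exact ⟨by omega, ⟨by omega, by omega⟩, by simpa using h2⟩
  have bij : ((A.erase ((s:ℕ)+1)).erase ((s:ℕ)+2)).card = (B.erase ((s:ℕ)+1)).card := by
    apply Finset.card_nbij' (fun i => if i ≤ (s:ℕ) then i else i - 1)
      (fun j => if j ≤ (s:ℕ) then j else j + 1)
    · intro a ha
      simp only [Finset.mem_coe] at ha ⊢
      rw [Finset.mem_erase, Finset.mem_erase, hAdef, Finset.mem_filter, Finset.mem_Icc] at ha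
      obtain ⟨hne2, hne1, ⟨ha1, ha2⟩, hcond⟩ := ha
      rw [pv_ins, pv_ins] at hcond
      rw [Finset.mem_erase, hBdef, Finset.mem_filter, Finset.mem_Icc]
      by_cases hle : a ≤ (s:ℕ)
      · rw [if_pos hle]
        rw [if_neg (by omega), if_pos (by omega), if_neg (by omega), if_pos (by omega)] at hcond
        exact ⟨by omega, ⟨by omega, by omega⟩, hcond⟩
      · rw [if_neg hle]
        rw [if_neg (by omega), if_neg (by omega), if_neg (by omega), if_neg (by omega)] at hcond
        refine ⟨by omega, ⟨by omega, by omega⟩, ?_⟩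
        have : a - 1 - 1 = a - 2 := by omega
        rw [this]
        exact hcond
    · intro b hb
      simp only [Finset.mem_coe] at hb ⊢
      rw [Finset.mem_erase, hBdef, Finset.mem_filter, Finset.mem_Icc] at hb
      obtain ⟨hne1, ⟨hb1, hb2⟩, hcond⟩ := hb
      rw [Finset.mem_erase, Finset.mem_erase, hAdef, Finset.mem_filter, Finset.mem_Icc]
      by_cases hle : b ≤ (s:ℕ)
      · rw [if_pos hle]
        refine ⟨by omega, by omega, ⟨by omega, by omega⟩, ?_⟩
        rw [pv_ins, pv_ins, if_neg (by omega), if_pos (by omega), if_neg (by omega),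
          if_pos (by omega)]
        exact hcond
      · rw [if_neg hle]
        refine ⟨by omega, by omega, ⟨by omega, by omega⟩, ?_⟩
        rw [pv_ins, pv_ins, if_neg (by omega), if_neg (by omega), if_neg (by omega),
          if_neg (by omega)]
        exact hcond
    · intro a ha
      simp only [Finset.mem_coe] at ha ⊢
      rw [Finset.mem_erase, Finset.mem_erase, hAdef, Finset.mem_filter, Finset.mem_Icc] at ha
      by_cases hle : a ≤ (s:ℕ)
      · rw [if_pos hle, if_pos hle]
      · rw [if_neg hle, if_neg (by omega)]
        omega
    · intro b hb
      simp only [Finset.mem_coe] at hb ⊢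
      rw [Finset.mem_erase, hBdef, Finset.mem_filter, Finset.mem_Icc] at hb
      by_cases hle : b ≤ (s:ℕ)
      · rw [if_pos hle, if_pos hle]
      · rw [if_neg hle, if_neg (by omega)]; omega
  rw [e1, e2, bij]
  simp only [mem1, mem2]
  omega

/-- Descents in "pair" form: comparisons `(i-1, i)` over the full range `[1, n]`. -/
lemma des_eq (σ : Equiv.Perm (Fin n)) :
    des σ = ((Finset.Icc 1 n).filter (fun i => pv σ i < pv σ (i - 1))).card := by
  unfold des
  apply Finset.card_nbij' (fun i => i + 1) (fun j => j - 1)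
  · intro a ha
    simp only [Finset.mem_coe] at ha ⊢
    rw [Finset.mem_filter, Finset.mem_Icc] at ha ⊢
    obtain ⟨⟨h1, h2⟩, h3⟩ := ha
    have : a + 1 - 1 = a := by omega
    rw [this]
    exact ⟨⟨by omega, by omega⟩, h3⟩
  · intro b hb
    simp only [Finset.mem_coe] at hb ⊢
    rw [Finset.mem_filter, Finset.mem_Icc] at hb ⊢
    obtain ⟨⟨h1, h2⟩, h3⟩ := hb
    have hb2 : 2 ≤ b := by
      by_contra hc
      have hb1 : b = 1 := by omega
      rw [hb1] at h3
      simp only [Nat.sub_self, pv_zero] at h3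
      omega
    have : b - 1 + 1 = b := by omega
    rw [this]
    exact ⟨⟨by omega, by omega⟩, h3⟩
  · intro a ha; simp only [Finset.mem_coe] at ha ⊢; omega
  · intro b hb
    simp only [Finset.mem_coe] at hb ⊢
    rw [Finset.mem_filter, Finset.mem_Icc] at hb
    have hb2 : 2 ≤ b := by
      by_contra hc
      have hb1 : b = 1 := by omega
      rw [hb1] at hb
      simp only [Nat.sub_self, pv_zero] at hb
      omega
    omega

lemma jump_add_des_add_lsuc (σ : Equiv.Perm (Fin n)) :
    jump σ + des σ + lsuc σ = n := by
  rw [des_eq]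
  unfold jump lsuc
  have key : ∀ i ∈ Finset.Icc 1 n,
      ((pv σ (i-1) + 2 ≤ pv σ i ∧ ¬(pv σ i < pv σ (i-1)) ∧ ¬(pv σ (i-1) + 1 = pv σ i))
      ∨ (pv σ i < pv σ (i-1) ∧ ¬(pv σ (i-1) + 2 ≤ pv σ i) ∧ ¬(pv σ (i-1) + 1 = pv σ i))
      ∨ (pv σ (i-1) + 1 = pv σ i ∧ ¬(pv σ (i-1) + 2 ≤ pv σ i) ∧ ¬(pv σ i < pv σ (i-1)))) := by
    intro i hi
    rw [Finset.mem_Icc] at hi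
    have := pv_ne σ hi.1 hi.2
    omega
  have h1 : ((Finset.Icc 1 n).filter (fun i => pv σ (i-1) + 2 ≤ pv σ i)).card
      + ((Finset.Icc 1 n).filter (fun i => ¬(pv σ (i-1) + 2 ≤ pv σ i))).card = n := by
    rw [Finset.card_filter_add_card_filter_not]
    simp
  have h2 : ((Finset.Icc 1 n).filter (fun i => ¬(pv σ (i-1) + 2 ≤ pv σ i))).card
      = ((Finset.Icc 1 n).filter (fun i => pv σ i < pv σ (i-1))).card
        + ((Finset.Icc 1 n).filter (fun i => pv σ (i-1) + 1 = pv σ i)).card := by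
    rw [← Finset.card_union_of_disjoint]
    · congr 1
      ext i
      simp only [Finset.mem_union, Finset.mem_filter]
      constructor
      · rintro ⟨hi, hc⟩
        rcases key i hi with h | h | h
        · omega
        · exact Or.inl ⟨hi, h.1⟩
        · exact Or.inr ⟨hi, h.1⟩
      · rintro (⟨hi, hc⟩ | ⟨hi, hc⟩) <;> exact ⟨hi, by omega⟩
    · rw [Finset.disjoint_filter]
      intro i hi h1 h2
      omega
  omega

lemma jump_ins (τ : Equiv.Perm (Fin n)) (s : Fin (n+1)) :
    jump (ins τ s)
    = (((Finset.Icc 1 n).filter (fun i => pv τ (i-1) + 2 ≤ pv τ i)).erase ((s:ℕ)+1)).card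
      + (if pv τ (s:ℕ) + 2 ≤ n+1 then 1 else 0)
      + (if (s:ℕ)+1 ≤ n ∧ n+1+2 ≤ pv τ ((s:ℕ)+1) then 1 else 0) :=
  card_pairs_ins (fun a b => a + 2 ≤ b) τ s

lemma lsuc_ins (τ : Equiv.Perm (Fin n)) (s : Fin (n+1)) :
    lsuc (ins τ s)
    = (((Finset.Icc 1 n).filter (fun i => pv τ (i-1) + 1 = pv τ i)).erase ((s:ℕ)+1)).card
      + (if pv τ (s:ℕ) + 1 = n+1 then 1 else 0)
      + (if (s:ℕ)+1 ≤ n ∧ n+1+1 = pv τ ((s:ℕ)+1) then 1 else 0) :=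
  card_pairs_ins (fun a b => a + 1 = b) τ s

lemma des_ins (τ : Equiv.Perm (Fin n)) (s : Fin (n+1)) :
    des (ins τ s)
    = (((Finset.Icc 1 n).filter (fun i => pv τ i < pv τ (i-1))).erase ((s:ℕ)+1)).card
      + (if n+1 < pv τ (s:ℕ) then 1 else 0)
      + (if (s:ℕ)+1 ≤ n ∧ pv τ ((s:ℕ)+1) < n+1 then 1 else 0) := by
  rw [des_eq]
  exact card_pairs_ins (fun a b => b < a) τ s


section Classes
variable (τ : Equiv.Perm (Fin n)) (s : Fin (n+1))

lemma stats_A (hA : pv τ (s:ℕ) = n) :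
    jump (ins τ s) = jump τ ∧ des (ins τ s) = des τ ∧ lsuc (ins τ s) = lsuc τ + 1 := by
  have hle2 := pv_le τ ((s:ℕ)+1)
  have hne : (s:ℕ)+1 ≤ n → pv τ (s:ℕ) ≠ pv τ ((s:ℕ)+1) := fun h => by
    have := pv_ne τ (i := (s:ℕ)+1) (by omega) h
    rwa [Nat.add_sub_cancel] at this
  refine ⟨?_, ?_, ?_⟩
  · have hnm : (s:ℕ)+1 ∉ (Finset.Icc 1 n).filter (fun i => pv τ (i-1) + 2 ≤ pv τ i) := by
      simp only [Finset.mem_filter, Finset.mem_Icc, Nat.add_sub_cancel]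
      omega
    rw [jump_ins, Finset.erase_eq_of_notMem hnm, if_neg (by omega), if_neg (by omega)]
    unfold jump; omega
  · rw [des_ins, des_eq]
    by_cases hcase : (s:ℕ)+1 ≤ n
    · have hmem : (s:ℕ)+1 ∈ (Finset.Icc 1 n).filter (fun i => pv τ i < pv τ (i-1)) := by
        simp only [Finset.mem_filter, Finset.mem_Icc, Nat.add_sub_cancel]
        have := hne hcase
        omega
      have hpos := Finset.card_pos.mpr ⟨_, hmem⟩
      rw [Finset.card_erase_of_mem hmem, if_neg (by omega), if_pos (by omega)]
      omega
    · have hnm : (s:ℕ)+1 ∉ (Finset.Icc 1 n).filter (fun i => pv τ i < pv τ (i-1)) := by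
        simp only [Finset.mem_filter, Finset.mem_Icc, Nat.add_sub_cancel]
        omega
      rw [Finset.erase_eq_of_notMem hnm, if_neg (by omega), if_neg (by omega)]
      omega
  · have hnm : (s:ℕ)+1 ∉ (Finset.Icc 1 n).filter (fun i => pv τ (i-1) + 1 = pv τ i) := by
      simp only [Finset.mem_filter, Finset.mem_Icc, Nat.add_sub_cancel]
      intro h1
      omega
    rw [lsuc_ins, Finset.erase_eq_of_notMem hnm, if_pos (by omega), if_neg (by omega)]
    unfold lsuc; omega

lemma stats_B (hB : pv τ (s:ℕ) + 2 ≤ pv τ ((s:ℕ)+1)) :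
    jump (ins τ s) = jump τ ∧ des (ins τ s) = des τ + 1 ∧ lsuc (ins τ s) = lsuc τ := by
  have hle2 := pv_le τ ((s:ℕ)+1)
  have hrange : (s:ℕ)+1 ≤ n := by
    by_contra hc
    rw [pv_eq_zero τ (i := (s:ℕ)+1) (by omega)] at hB
    omega
  refine ⟨?_, ?_, ?_⟩
  · have hmem : (s:ℕ)+1 ∈ (Finset.Icc 1 n).filter (fun i => pv τ (i-1) + 2 ≤ pv τ i) := by
      simp only [Finset.mem_filter, Finset.mem_Icc, Nat.add_sub_cancel]
      omega
    have hpos := Finset.card_pos.mpr ⟨_, hmem⟩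
    rw [jump_ins, Finset.card_erase_of_mem hmem, if_pos (by omega), if_neg (by omega)]
    unfold jump; omega
  · have hnm : (s:ℕ)+1 ∉ (Finset.Icc 1 n).filter (fun i => pv τ i < pv τ (i-1)) := by
      simp only [Finset.mem_filter, Finset.mem_Icc, Nat.add_sub_cancel]
      omega
    rw [des_ins, des_eq, Finset.erase_eq_of_notMem hnm, if_neg (by omega), if_pos (by omega)]
  · have hnm : (s:ℕ)+1 ∉ (Finset.Icc 1 n).filter (fun i => pv τ (i-1) + 1 = pv τ i) := by
      simp only [Finset.mem_filter, Finset.mem_Icc, Nat.add_sub_cancel]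
      omega
    rw [lsuc_ins, Finset.erase_eq_of_notMem hnm, if_neg (by omega), if_neg (by omega)]
    unfold lsuc; omega

lemma stats_C (hC : pv τ (s:ℕ) + 1 = pv τ ((s:ℕ)+1)) :
    jump (ins τ s) = jump τ + 1 ∧ des (ins τ s) = des τ + 1
      ∧ lsuc (ins τ s) = lsuc τ - 1 ∧ 1 ≤ lsuc τ := by
  have hle2 := pv_le τ ((s:ℕ)+1)
  have hrange : (s:ℕ)+1 ≤ n := by
    by_contra hc
    rw [pv_eq_zero τ (i := (s:ℕ)+1) (by omega)] at hC
    omega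
  have hmem : (s:ℕ)+1 ∈ (Finset.Icc 1 n).filter (fun i => pv τ (i-1) + 1 = pv τ i) := by
    simp only [Finset.mem_filter, Finset.mem_Icc, Nat.add_sub_cancel]
    omega
  have hpos : 1 ≤ lsuc τ := by
    have := Finset.card_pos.mpr ⟨_, hmem⟩
    unfold lsuc; omega
  refine ⟨?_, ?_, ?_, hpos⟩
  · have hnm : (s:ℕ)+1 ∉ (Finset.Icc 1 n).filter (fun i => pv τ (i-1) + 2 ≤ pv τ i) := by
      simp only [Finset.mem_filter, Finset.mem_Icc, Nat.add_sub_cancel]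
      omega
    rw [jump_ins, Finset.erase_eq_of_notMem hnm, if_pos (by omega), if_neg (by omega)]
    unfold jump; omega
  · have hnm : (s:ℕ)+1 ∉ (Finset.Icc 1 n).filter (fun i => pv τ i < pv τ (i-1)) := by
      simp only [Finset.mem_filter, Finset.mem_Icc, Nat.add_sub_cancel]
      omega
    rw [des_ins, des_eq, Finset.erase_eq_of_notMem hnm, if_neg (by omega), if_pos (by omega)]
  · rw [lsuc_ins, Finset.card_erase_of_mem hmem, if_neg (by omega), if_neg (by omega)]
    unfold lsuc; omega

lemma stats_D (hD1 : pv τ (s:ℕ) ≠ n) (hDB : ¬ (pv τ (s:ℕ) + 2 ≤ pv τ ((s:ℕ)+1)))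
    (hDC : ¬ (pv τ (s:ℕ) + 1 = pv τ ((s:ℕ)+1))) :
    jump (ins τ s) = jump τ + 1 ∧ des (ins τ s) = des τ ∧ lsuc (ins τ s) = lsuc τ := by
  have hle1 := pv_le τ (s:ℕ)
  have hle2 := pv_le τ ((s:ℕ)+1)
  have hne : (s:ℕ)+1 ≤ n → pv τ (s:ℕ) ≠ pv τ ((s:ℕ)+1) := fun h => by
    have := pv_ne τ (i := (s:ℕ)+1) (by omega) h
    rwa [Nat.add_sub_cancel] at this
  have h0 : ¬ ((s:ℕ)+1 ≤ n) → pv τ ((s:ℕ)+1) = 0 := fun h => pv_eq_zero τ (by omega)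
  refine ⟨?_, ?_, ?_⟩
  · have hnm : (s:ℕ)+1 ∉ (Finset.Icc 1 n).filter (fun i => pv τ (i-1) + 2 ≤ pv τ i) := by
      simp only [Finset.mem_filter, Finset.mem_Icc, Nat.add_sub_cancel]
      omega
    rw [jump_ins, Finset.erase_eq_of_notMem hnm, if_pos (by omega), if_neg (by omega)]
    unfold jump; omega
  · rw [des_ins, des_eq]
    by_cases hcase : (s:ℕ)+1 ≤ n
    · have hmem : (s:ℕ)+1 ∈ (Finset.Icc 1 n).filter (fun i => pv τ i < pv τ (i-1)) := by
        simp only [Finset.mem_filter, Finset.mem_Icc, Nat.add_sub_cancel]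
        have := hne hcase
        omega
      have hpos := Finset.card_pos.mpr ⟨_, hmem⟩
      rw [Finset.card_erase_of_mem hmem, if_neg (by omega), if_pos (by omega)]
      omega
    · have hnm : (s:ℕ)+1 ∉ (Finset.Icc 1 n).filter (fun i => pv τ i < pv τ (i-1)) := by
        simp only [Finset.mem_filter, Finset.mem_Icc, Nat.add_sub_cancel]
        omega
      rw [Finset.erase_eq_of_notMem hnm, if_neg (by omega), if_neg (by omega)]
      omega
  · have hnm : (s:ℕ)+1 ∉ (Finset.Icc 1 n).filter (fun i => pv τ (i-1) + 1 = pv τ i) := by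
      simp only [Finset.mem_filter, Finset.mem_Icc, Nat.add_sub_cancel]
      omega
    rw [lsuc_ins, Finset.erase_eq_of_notMem hnm, if_neg (by omega), if_neg (by omega)]
    unfold lsuc; omega

end Classes

lemma cardA (τ : Equiv.Perm (Fin n)) :
    (Finset.univ.filter (fun s : Fin (n+1) => pv τ (s:ℕ) = n)).card = 1 := by
  rw [Finset.card_eq_one]
  by_cases hn : n = 0
  · subst hn
    refine ⟨0, ?_⟩
    ext s
    have hs0 : s = 0 := Fin.ext (by have := s.isLt; omega)
    subst hs0
    simp [pv_zero]
  · have hlt : n - 1 < n := by omega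
    have htlt := (τ.symm ⟨n-1, hlt⟩).isLt
    refine ⟨⟨((τ.symm ⟨n-1, hlt⟩ : Fin n) : ℕ) + 1, by omega⟩, ?_⟩
    ext s
    simp only [Finset.mem_filter, Finset.mem_univ, true_and, Finset.mem_singleton,
      Fin.ext_iff]
    constructor
    · intro hpv
      have hrange : 1 ≤ (s:ℕ) ∧ (s:ℕ) ≤ n := by
        by_contra hc
        rw [pv_eq_zero τ hc] at hpv
        omega
      have hval : ((τ ⟨(s:ℕ)-1, by omega⟩ : Fin n) : ℕ) + 1 = n := by
        unfold pv at hpv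
        rwa [dif_pos hrange] at hpv
      have h1 : τ ⟨(s:ℕ)-1, by omega⟩ = ⟨n-1, hlt⟩ := by
        apply Fin.ext
        show ((τ ⟨(s:ℕ)-1, by omega⟩ : Fin n) : ℕ) = n - 1
        omega
      have h2 : (⟨(s:ℕ)-1, by omega⟩ : Fin n) = τ.symm ⟨n-1, hlt⟩ :=
        (Equiv.eq_symm_apply τ).mpr h1
      have h3 : (s:ℕ) - 1 = ((τ.symm ⟨n-1, hlt⟩ : Fin n) : ℕ) := congrArg Fin.val h2
      show (s:ℕ) = ((τ.symm ⟨n-1, hlt⟩ : Fin n) : ℕ) + 1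
      omega
    · intro hs
      have hs' : (s:ℕ) = ((τ.symm ⟨n-1, hlt⟩ : Fin n) : ℕ) + 1 := hs
      unfold pv
      rw [dif_pos ⟨by omega, by omega⟩]
      have h4 : (⟨(s:ℕ)-1, by omega⟩ : Fin n) = τ.symm ⟨n-1, hlt⟩ := Fin.ext (by
        show (s:ℕ) - 1 = _
        omega)
      rw [h4, Equiv.apply_symm_apply]
      show n - 1 + 1 = n
      omega

lemma cardB (τ : Equiv.Perm (Fin n)) :
    (Finset.univ.filter (fun s : Fin (n+1) => pv τ (s:ℕ) + 2 ≤ pv τ ((s:ℕ)+1))).card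
      = jump τ := by
  unfold jump
  refine Finset.card_nbij' (i := fun s => (s:ℕ)+1)
    (j := fun b => (⟨min (b-1) n, by omega⟩ : Fin (n+1))) ?_ ?_ ?_ ?_
  · intro s hs
    simp only [Finset.mem_coe] at hs ⊢
    rw [Finset.mem_filter] at hs
    obtain ⟨-, hc⟩ := hs
    have hr : (s:ℕ)+1 ≤ n := by
      by_contra h
      rw [pv_eq_zero τ (i := (s:ℕ)+1) (by omega)] at hc
      omega
    simp only [Finset.mem_filter, Finset.mem_Icc, Nat.add_sub_cancel]
    exact ⟨⟨by omega, hr⟩, hc⟩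
  · intro b hb
    simp only [Finset.mem_coe] at hb ⊢
    rw [Finset.mem_filter, Finset.mem_Icc] at hb
    obtain ⟨⟨h1, h2⟩, hc⟩ := hb
    rw [Finset.mem_filter]
    refine ⟨Finset.mem_univ _, ?_⟩
    show pv τ ((⟨min (b-1) n, by omega⟩ : Fin (n+1)) : ℕ) + 2
        ≤ pv τ (((⟨min (b-1) n, by omega⟩ : Fin (n+1)) : ℕ) + 1)
    have hv : ((⟨min (b-1) n, by omega⟩ : Fin (n+1)) : ℕ) = b - 1 := by
      show min (b-1) n = b - 1
      omega
    rw [hv]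
    have hb1 : b - 1 + 1 = b := by omega
    rw [hb1]
    exact hc
  · intro s hs
    simp only [Finset.mem_coe] at hs ⊢
    rw [Finset.mem_filter] at hs
    obtain ⟨-, hc⟩ := hs
    have hr : (s:ℕ)+1 ≤ n := by
      by_contra h
      rw [pv_eq_zero τ (i := (s:ℕ)+1) (by omega)] at hc
      omega
    apply Fin.ext
    show min ((s:ℕ)+1-1) n = (s:ℕ)
    omega
  · intro b hb
    simp only [Finset.mem_coe] at hb ⊢
    rw [Finset.mem_filter, Finset.mem_Icc] at hb
    show min (b-1) n + 1 = b
    omega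

lemma cardC (τ : Equiv.Perm (Fin n)) :
    (Finset.univ.filter (fun s : Fin (n+1) => pv τ (s:ℕ) + 1 = pv τ ((s:ℕ)+1))).card
      = lsuc τ := by
  unfold lsuc
  refine Finset.card_nbij' (i := fun s => (s:ℕ)+1)
    (j := fun b => (⟨min (b-1) n, by omega⟩ : Fin (n+1))) ?_ ?_ ?_ ?_
  · intro s hs
    simp only [Finset.mem_coe] at hs ⊢
    rw [Finset.mem_filter] at hs
    obtain ⟨-, hc⟩ := hs
    have hr : (s:ℕ)+1 ≤ n := by
      by_contra h
      rw [pv_eq_zero τ (i := (s:ℕ)+1) (by omega)] at hc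
      omega
    simp only [Finset.mem_filter, Finset.mem_Icc, Nat.add_sub_cancel]
    exact ⟨⟨by omega, hr⟩, hc⟩
  · intro b hb
    simp only [Finset.mem_coe] at hb ⊢
    rw [Finset.mem_filter, Finset.mem_Icc] at hb
    obtain ⟨⟨h1, h2⟩, hc⟩ := hb
    rw [Finset.mem_filter]
    refine ⟨Finset.mem_univ _, ?_⟩
    show pv τ ((⟨min (b-1) n, by omega⟩ : Fin (n+1)) : ℕ) + 1
        = pv τ (((⟨min (b-1) n, by omega⟩ : Fin (n+1)) : ℕ) + 1)
    have hv : ((⟨min (b-1) n, by omega⟩ : Fin (n+1)) : ℕ) = b - 1 := by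
      show min (b-1) n = b - 1
      omega
    rw [hv]
    have hb1 : b - 1 + 1 = b := by omega
    rw [hb1]
    exact hc
  · intro s hs
    simp only [Finset.mem_coe] at hs ⊢
    rw [Finset.mem_filter] at hs
    obtain ⟨-, hc⟩ := hs
    have hr : (s:ℕ)+1 ≤ n := by
      by_contra h
      rw [pv_eq_zero τ (i := (s:ℕ)+1) (by omega)] at hc
      omega
    apply Fin.ext
    show min ((s:ℕ)+1-1) n = (s:ℕ)
    omega
  · intro b hb
    simp only [Finset.mem_coe] at hb ⊢
    rw [Finset.mem_filter, Finset.mem_Icc] at hb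
    show min (b-1) n + 1 = b
    omega

lemma cardD (τ : Equiv.Perm (Fin n)) :
    (((Finset.univ.filter (fun s : Fin (n+1) => ¬ pv τ (s:ℕ) = n)).filter
        (fun s : Fin (n+1) => ¬ pv τ (s:ℕ) + 2 ≤ pv τ ((s:ℕ)+1))).filter
        (fun s : Fin (n+1) => ¬ pv τ (s:ℕ) + 1 = pv τ ((s:ℕ)+1))).card = des τ := by
  have t1 : ((Finset.univ : Finset (Fin (n+1))).filter (fun s : Fin (n+1) => pv τ (s:ℕ) = n)).card
      + ((Finset.univ : Finset (Fin (n+1))).filter (fun s : Fin (n+1) => ¬ pv τ (s:ℕ) = n)).card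
      = n + 1 := by
    rw [Finset.card_filter_add_card_filter_not]
    simp
  have t2 : (((Finset.univ : Finset (Fin (n+1))).filter (fun s : Fin (n+1) => ¬ pv τ (s:ℕ) = n)).filter
        (fun s : Fin (n+1) => pv τ (s:ℕ) + 2 ≤ pv τ ((s:ℕ)+1))).card
      + (((Finset.univ : Finset (Fin (n+1))).filter (fun s : Fin (n+1) => ¬ pv τ (s:ℕ) = n)).filter
        (fun s : Fin (n+1) => ¬ pv τ (s:ℕ) + 2 ≤ pv τ ((s:ℕ)+1))).card
      = ((Finset.univ : Finset (Fin (n+1))).filter (fun s : Fin (n+1) => ¬ pv τ (s:ℕ) = n)).card :=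
    Finset.card_filter_add_card_filter_not _
  have t3 : ((((Finset.univ : Finset (Fin (n+1))).filter (fun s : Fin (n+1) => ¬ pv τ (s:ℕ) = n)).filter
        (fun s : Fin (n+1) => ¬ pv τ (s:ℕ) + 2 ≤ pv τ ((s:ℕ)+1))).filter
        (fun s : Fin (n+1) => pv τ (s:ℕ) + 1 = pv τ ((s:ℕ)+1))).card
      + ((((Finset.univ : Finset (Fin (n+1))).filter (fun s : Fin (n+1) => ¬ pv τ (s:ℕ) = n)).filter
        (fun s : Fin (n+1) => ¬ pv τ (s:ℕ) + 2 ≤ pv τ ((s:ℕ)+1))).filter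
        (fun s : Fin (n+1) => ¬ pv τ (s:ℕ) + 1 = pv τ ((s:ℕ)+1))).card
      = (((Finset.univ : Finset (Fin (n+1))).filter (fun s : Fin (n+1) => ¬ pv τ (s:ℕ) = n)).filter
        (fun s : Fin (n+1) => ¬ pv τ (s:ℕ) + 2 ≤ pv τ ((s:ℕ)+1))).card :=
    Finset.card_filter_add_card_filter_not _
  have eB : ((Finset.univ : Finset (Fin (n+1))).filter (fun s : Fin (n+1) => ¬ pv τ (s:ℕ) = n)).filter
        (fun s : Fin (n+1) => pv τ (s:ℕ) + 2 ≤ pv τ ((s:ℕ)+1))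
      = (Finset.univ : Finset (Fin (n+1))).filter
        (fun s : Fin (n+1) => pv τ (s:ℕ) + 2 ≤ pv τ ((s:ℕ)+1)) := by
    rw [Finset.filter_filter]
    apply Finset.filter_congr
    intro s _
    have h2 := pv_le τ ((s:ℕ)+1)
    constructor
    · tauto
    · intro h; exact ⟨by omega, h⟩
  have eC : (((Finset.univ : Finset (Fin (n+1))).filter (fun s : Fin (n+1) => ¬ pv τ (s:ℕ) = n)).filter
        (fun s : Fin (n+1) => ¬ pv τ (s:ℕ) + 2 ≤ pv τ ((s:ℕ)+1))).filter
        (fun s : Fin (n+1) => pv τ (s:ℕ) + 1 = pv τ ((s:ℕ)+1))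
      = (Finset.univ : Finset (Fin (n+1))).filter
        (fun s : Fin (n+1) => pv τ (s:ℕ) + 1 = pv τ ((s:ℕ)+1)) := by
    rw [Finset.filter_filter, Finset.filter_filter]
    apply Finset.filter_congr
    intro s _
    have h2 := pv_le τ ((s:ℕ)+1)
    constructor
    · tauto
    · intro h; exact ⟨by omega, by omega, h⟩
  rw [eB, cardB] at t2
  rw [eC, cardC] at t3
  rw [cardA] at t1
  have := jump_add_des_add_lsuc τ
  omega


lemma sum_ins (τ : Equiv.Perm (Fin n)) :
    ∑ s : Fin (n+1),
      (X 1 ^ jump (ins τ s) * X 2 ^ des (ins τ s) * X 3 ^ lsuc (ins τ s)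
        : MvPolynomial (Fin 4) ℤ)
    = X 1 ^ jump τ * X 2 ^ des τ * X 3 ^ (lsuc τ + 1)
      + jump τ • (X 1 ^ jump τ * X 2 ^ (des τ + 1) * X 3 ^ lsuc τ)
      + des τ • (X 1 ^ (jump τ + 1) * X 2 ^ des τ * X 3 ^ lsuc τ)
      + lsuc τ • (X 1 ^ (jump τ + 1) * X 2 ^ (des τ + 1) * X 3 ^ (lsuc τ - 1)) := by
  classical
  set f : Fin (n+1) → MvPolynomial (Fin 4) ℤ :=
    fun s => X 1 ^ jump (ins τ s) * X 2 ^ des (ins τ s) * X 3 ^ lsuc (ins τ s) with hf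
  have split1 := Finset.sum_filter_add_sum_filter_not (Finset.univ : Finset (Fin (n+1)))
    (fun s : Fin (n+1) => pv τ (s:ℕ) = n) f
  have split2 := Finset.sum_filter_add_sum_filter_not
    (Finset.univ.filter (fun s : Fin (n+1) => ¬ pv τ (s:ℕ) = n))
    (fun s : Fin (n+1) => pv τ (s:ℕ) + 2 ≤ pv τ ((s:ℕ)+1)) f
  have split3 := Finset.sum_filter_add_sum_filter_not
    ((Finset.univ.filter (fun s : Fin (n+1) => ¬ pv τ (s:ℕ) = n)).filter
      (fun s : Fin (n+1) => ¬ pv τ (s:ℕ) + 2 ≤ pv τ ((s:ℕ)+1)))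
    (fun s : Fin (n+1) => pv τ (s:ℕ) + 1 = pv τ ((s:ℕ)+1)) f
  -- class A sum
  have hA : ∑ s ∈ Finset.univ.filter (fun s : Fin (n+1) => pv τ (s:ℕ) = n), f s
      = X 1 ^ jump τ * X 2 ^ des τ * X 3 ^ (lsuc τ + 1) := by
    rw [Finset.sum_congr rfl (fun s hs => ?_), Finset.sum_const, cardA, one_smul]
    rw [Finset.mem_filter] at hs
    obtain ⟨hj, hd, hl⟩ := stats_A τ s hs.2
    rw [hf]
    simp only [hj, hd, hl]
  -- class B sum
  have eB : (Finset.univ.filter (fun s : Fin (n+1) => ¬ pv τ (s:ℕ) = n)).filter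
        (fun s : Fin (n+1) => pv τ (s:ℕ) + 2 ≤ pv τ ((s:ℕ)+1))
      = Finset.univ.filter (fun s : Fin (n+1) => pv τ (s:ℕ) + 2 ≤ pv τ ((s:ℕ)+1)) := by
    rw [Finset.filter_filter]
    apply Finset.filter_congr
    intro s _
    have h2 := pv_le τ ((s:ℕ)+1)
    constructor
    · tauto
    · intro h; exact ⟨by omega, h⟩
  have hB : ∑ s ∈ (Finset.univ.filter (fun s : Fin (n+1) => ¬ pv τ (s:ℕ) = n)).filter
        (fun s : Fin (n+1) => pv τ (s:ℕ) + 2 ≤ pv τ ((s:ℕ)+1)), f s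
      = jump τ • (X 1 ^ jump τ * X 2 ^ (des τ + 1) * X 3 ^ lsuc τ) := by
    rw [eB, Finset.sum_congr rfl (fun s hs => ?_), Finset.sum_const, cardB]
    rw [Finset.mem_filter] at hs
    obtain ⟨hj, hd, hl⟩ := stats_B τ s hs.2
    rw [hf]
    simp only [hj, hd, hl]
  -- class C sum
  have eC : ((Finset.univ.filter (fun s : Fin (n+1) => ¬ pv τ (s:ℕ) = n)).filter
        (fun s : Fin (n+1) => ¬ pv τ (s:ℕ) + 2 ≤ pv τ ((s:ℕ)+1))).filter
        (fun s : Fin (n+1) => pv τ (s:ℕ) + 1 = pv τ ((s:ℕ)+1))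
      = Finset.univ.filter (fun s : Fin (n+1) => pv τ (s:ℕ) + 1 = pv τ ((s:ℕ)+1)) := by
    rw [Finset.filter_filter, Finset.filter_filter]
    apply Finset.filter_congr
    intro s _
    have h2 := pv_le τ ((s:ℕ)+1)
    constructor
    · tauto
    · intro h; exact ⟨by omega, by omega, h⟩
  have hC : ∑ s ∈ ((Finset.univ.filter (fun s : Fin (n+1) => ¬ pv τ (s:ℕ) = n)).filter
        (fun s : Fin (n+1) => ¬ pv τ (s:ℕ) + 2 ≤ pv τ ((s:ℕ)+1))).filter
        (fun s : Fin (n+1) => pv τ (s:ℕ) + 1 = pv τ ((s:ℕ)+1)), f s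
      = lsuc τ • (X 1 ^ (jump τ + 1) * X 2 ^ (des τ + 1) * X 3 ^ (lsuc τ - 1)) := by
    rw [eC, Finset.sum_congr rfl (fun s hs => ?_), Finset.sum_const, cardC]
    rw [Finset.mem_filter] at hs
    obtain ⟨hj, hd, hl, -⟩ := stats_C τ s hs.2
    rw [hf]
    simp only [hj, hd, hl]
  -- class D sum
  have hD : ∑ s ∈ ((Finset.univ.filter (fun s : Fin (n+1) => ¬ pv τ (s:ℕ) = n)).filter
        (fun s : Fin (n+1) => ¬ pv τ (s:ℕ) + 2 ≤ pv τ ((s:ℕ)+1))).filter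
        (fun s : Fin (n+1) => ¬ pv τ (s:ℕ) + 1 = pv τ ((s:ℕ)+1)), f s
      = des τ • (X 1 ^ (jump τ + 1) * X 2 ^ des τ * X 3 ^ lsuc τ) := by
    rw [Finset.sum_congr rfl (fun s hs => ?_), Finset.sum_const, cardD]
    rw [Finset.mem_filter, Finset.mem_filter, Finset.mem_filter] at hs
    obtain ⟨hj, hd, hl⟩ := stats_D τ s hs.1.1.2 hs.1.2 hs.2
    rw [hf]
    simp only [hj, hd, hl]
  rw [hA] at split1
  rw [hB] at split2
  rw [hC, hD] at split3
  rw [← split1, ← split2, ← split3]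
  abel

lemma ins_bijective :
    Function.Bijective (fun p : Equiv.Perm (Fin n) × Fin (n+1) => ins p.1 p.2) := by
  rw [Fintype.bijective_iff_injective_and_card]
  constructor
  · rintro ⟨τ, s⟩ ⟨τ', s'⟩ h
    simp only at h
    have hs : s = s' := by
      by_contra hne
      obtain ⟨j, hj⟩ := Fin.exists_succAbove_eq hne
      have h1 : ins τ s s = Fin.last n := ins_apply_self τ s
      have h2 : ins τ' s' s = (τ' j).castSucc := by rw [← hj, ins_apply_succAbove]
      rw [h] at h1
      rw [h1] at h2
      exact absurd h2.symm (Fin.castSucc_lt_last (τ' j)).ne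
    subst hs
    have hτ : τ = τ' := by
      apply Equiv.ext
      intro j
      have h1 : ins τ s (s.succAbove j) = (τ j).castSucc := ins_apply_succAbove τ s j
      have h2 : ins τ' s (s.succAbove j) = (τ' j).castSucc := ins_apply_succAbove τ' s j
      rw [h, h2] at h1
      exact (Fin.castSucc_injective n h1.symm)
    rw [hτ]
  · simp only [Fintype.card_prod, Fintype.card_perm, Fintype.card_fin, Nat.factorial_succ]
    ring

lemma Lpoly_succ (n : ℕ) :
    Lpoly (n+1) = X 3 * Lpoly n
      + ∑ τ : Equiv.Perm (Fin n),
          (jump τ • (X 1 ^ jump τ * X 2 ^ (des τ + 1) * X 3 ^ lsuc τ)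
           + des τ • (X 1 ^ (jump τ + 1) * X 2 ^ des τ * X 3 ^ lsuc τ)
           + lsuc τ • (X 1 ^ (jump τ + 1) * X 2 ^ (des τ + 1) * X 3 ^ (lsuc τ - 1))) := by
  rw [Lpoly]
  rw [← Fintype.sum_bijective _ ins_bijective
    (fun p : Equiv.Perm (Fin n) × Fin (n+1) =>
      (X 1 ^ jump (ins p.1 p.2) * X 2 ^ des (ins p.1 p.2) * X 3 ^ lsuc (ins p.1 p.2)
        : MvPolynomial (Fin 4) ℤ))
    _ (fun p => rfl)]
  rw [Fintype.sum_prod_type]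
  rw [Finset.sum_congr rfl (fun τ _ => sum_ins τ)]
  rw [Lpoly, Finset.mul_sum]
  rw [Finset.sum_add_distrib, Finset.sum_add_distrib, Finset.sum_add_distrib,
    Finset.sum_add_distrib, Finset.sum_add_distrib]
  have : ∑ τ : Equiv.Perm (Fin n),
      (X 1 ^ jump τ * X 2 ^ des τ * X 3 ^ (lsuc τ + 1) : MvPolynomial (Fin 4) ℤ)
      = ∑ τ : Equiv.Perm (Fin n),
        (X 3 * (X 1 ^ jump τ * X 2 ^ des τ * X 3 ^ lsuc τ) : MvPolynomial (Fin 4) ℤ) :=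
    Finset.sum_congr rfl (fun τ _ => by ring)
  rw [this]
  abel

lemma D_mono (D : Derivation ℤ (MvPolynomial (Fin 4) ℤ) (MvPolynomial (Fin 4) ℤ))
    (hx : D (X 1) = X 1 * X 2) (hy : D (X 2) = X 1 * X 2) (hz : D (X 3) = X 1 * X 2)
    (j d l : ℕ) :
    D (X 1 ^ j * X 2 ^ d * X 3 ^ l)
    = j • (X 1 ^ j * X 2 ^ (d+1) * X 3 ^ l)
      + d • (X 1 ^ (j+1) * X 2 ^ d * X 3 ^ l)
      + l • (X 1 ^ (j+1) * X 2 ^ (d+1) * X 3 ^ (l-1)) := by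
  rw [Derivation.leibniz, Derivation.leibniz, Derivation.leibniz_pow, Derivation.leibniz_pow,
    Derivation.leibniz_pow, hx, hy, hz]
  simp only [smul_eq_mul, nsmul_eq_mul]
  rcases j with _ | j <;> rcases d with _ | d <;> rcases l with _ | l <;>
    · push_cast [Nat.succ_sub_one]
      ring

lemma Lpoly_zero : Lpoly 0 = 1 := by
  rw [Lpoly]
  have hstat : ∀ σ : Equiv.Perm (Fin 0),
      (X 1 ^ jump σ * X 2 ^ des σ * X 3 ^ lsuc σ : MvPolynomial (Fin 4) ℤ) = 1 := by
    intro σ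
    have hIcc : (Finset.Icc 1 0 : Finset ℕ) = ∅ := Finset.Icc_eq_empty (by omega)
    have hj : jump σ = 0 := by unfold jump; rw [hIcc]; simp
    have hd : des σ = 0 := by unfold des; rw [Nat.zero_sub, hIcc]; simp
    have hl : lsuc σ = 0 := by unfold lsuc; rw [hIcc]; simp
    rw [hj, hd, hl]
    simp
  rw [Finset.sum_congr rfl (fun σ _ => hstat σ), Finset.sum_const, Finset.card_univ,
    Fintype.card_perm]
  simp


/-- Dumont's grammar also generates `L_n`: `Dⁿ(a) = a L_n(x,y,z)`. -/
theorem dumont_lsuc (D : Derivation ℤ (MvPolynomial (Fin 4) ℤ) (MvPolynomial (Fin 4) ℤ))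
    (ha : D (X 0) = X 0 * X 3) (hx : D (X 1) = X 1 * X 2)
    (hy : D (X 2) = X 1 * X 2) (hz : D (X 3) = X 1 * X 2) (n : ℕ) :
    (⇑D)^[n] (X 0) = X 0 * Lpoly n := by
  induction n with
  | zero => simp [Lpoly_zero]
  | succ n ih =>
    rw [Function.iterate_succ_apply', ih]
    have hDL : D (Lpoly n) = ∑ τ : Equiv.Perm (Fin n),
        (jump τ • (X 1 ^ jump τ * X 2 ^ (des τ + 1) * X 3 ^ lsuc τ)
         + des τ • (X 1 ^ (jump τ + 1) * X 2 ^ des τ * X 3 ^ lsuc τ)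
         + lsuc τ • (X 1 ^ (jump τ + 1) * X 2 ^ (des τ + 1) * X 3 ^ (lsuc τ - 1))) := by
      rw [Lpoly, map_sum]
      exact Finset.sum_congr rfl (fun τ _ => D_mono D hx hy hz _ _ _)
    rw [Derivation.leibniz, hDL, ha, smul_eq_mul, smul_eq_mul, Lpoly_succ]
    ring
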